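/- If G is a noncyclic finite abelian group of odd order n and type (n_1, …, n_r), then u±(G, (n−1)/2, 2) = n, where u±(G, m, h) = min{Π_{i=1}^r u(n_i, m_i, h) : 1 ≤ m_i ≤ n_i for each i and Π_{i=1}^r m_i ≥ m}. -/

import Mathlib

open Finset Pointwise

/-- The `h`-fold sumset of a finite subset `A` of an abelian group:
`hA = {Σ λ_a • a : λ : A → ℕ, Σ λ_a = h}`. -/
def foldSumset {G : Type*} [AddCommGroup G] (h : ℕ) (A : Finset G) : Set G :=
  {g | ∃ c : G → ℕ, (∑ a ∈ A, c a) = h ∧ (∑ a ∈ A, c a • a) = g}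

/-- The `h`-fold signed sumset of a finite subset `A` of an abelian group:
`h±A = {Σ λ_a • a : λ : A → ℤ, Σ |λ_a| = h}`. -/
def foldSignedSumset {G : Type*} [AddCommGroup G] (h : ℕ) (A : Finset G) : Set G :=
  {g | ∃ c : G → ℤ, (∑ a ∈ A, (c a).natAbs) = h ∧ (∑ a ∈ A, c a • a) = g}

/-- `ρ(G, m, h) = min {|hA| : A ⊆ G, |A| = m}`. -/
noncomputable def rho (G : Type*) [AddCommGroup G] (m h : ℕ) : ℕ :=
  sInf {k | ∃ A : Finset G, A.card = m ∧ (foldSumset h A).ncard = k}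

/-- `ρ±(G, m, h) = min {|h±A| : A ⊆ G, |A| = m}`. -/
noncomputable def rhoPM (G : Type*) [AddCommGroup G] (m h : ℕ) : ℕ :=
  sInf {k | ∃ A : Finset G, A.card = m ∧ (foldSignedSumset h A).ncard = k}

/-- `f_d(m, h) = (h⌈m/d⌉ - h + 1) d`. -/
def fdmh (d m h : ℕ) : ℕ := (h * ((m + d - 1) / d) - h + 1) * d

/-- `u(n, m, h) = min {f_d(m, h) : d a positive divisor of n}`. -/
noncomputable def uFun (n m h : ℕ) : ℕ :=
  sInf {k | ∃ d : ℕ, 0 < d ∧ d ∣ n ∧ k = fdmh d m h}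

lemma uFun_two_spec (n m : ℕ) (hn : 0 < n) (hm : 0 < m) (hmn : m ≤ n) :
    ∃ d t : ℕ, 0 < d ∧ d ∣ n ∧ d ∣ t ∧ m ≤ d + t ∧ d + t ≤ n ∧ uFun n m 2 = d + 2 * t := by
  have hne : {k | ∃ d : ℕ, 0 < d ∧ d ∣ n ∧ k = fdmh d m 2}.Nonempty :=
    ⟨fdmh 1 m 2, 1, one_pos, one_dvd n, rfl⟩
  obtain ⟨d, hd0, hdn, heq⟩ : uFun n m 2 ∈ {k | ∃ d : ℕ, 0 < d ∧ d ∣ n ∧ k = fdmh d m 2} := by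
    rw [uFun]; exact Nat.sInf_mem hne
  set q := (m + d - 1) / d with hq
  have hq1 : 1 ≤ q := by
    rw [hq, Nat.le_div_iff_mul_le hd0]; omega
  obtain ⟨p, hp⟩ : ∃ p, q = p + 1 := ⟨q - 1, by omega⟩
  have hdm : m ≤ q * d := by
    have h1 := Nat.div_add_mod (m + d - 1) d
    have h2 : (m + d - 1) % d < d := Nat.mod_lt _ hd0
    have h3 : d * q = d * ((m + d - 1) / d) := by rw [hq]
    have h4 : q * d = d * q := Nat.mul_comm _ _
    omega
  obtain ⟨c, hc⟩ := hdn
  have hqc : q ≤ c := by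
    have h1 : m + d - 1 ≤ d * c + (d - 1) := by omega
    have h2 := Nat.div_le_div_right (c := d) h1
    have h5 : (d * c + (d - 1)) / d = c := by
      rw [Nat.mul_add_div hd0, Nat.div_eq_of_lt (show d - 1 < d by omega)]
      rfl
    rw [h5] at h2
    exact h2
  refine ⟨d, p * d, hd0, ⟨c, hc⟩, dvd_mul_left d p, ?_, ?_, ?_⟩
  · have : q * d = (p + 1) * d := by rw [hp]
    nlinarith
  · have : q * d ≤ c * d := Nat.mul_le_mul_right d hqc
    nlinarith
  · rw [heq, fdmh]
    have h3 : 2 * ((m + d - 1) / d) - 2 + 1 = 2 * p + 1 := by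
      have : (m + d - 1) / d = q := by rw [hq]
      omega
    rw [h3]; ring

lemma uFun_self (n : ℕ) (hn : 0 < n) : uFun n n 2 = n := by
  apply le_antisymm
  · apply Nat.sInf_le
    refine ⟨n, hn, dvd_rfl, ?_⟩
    have h1 : (n + n - 1) / n = 1 := by
      have : n + n - 1 = n * 1 + (n - 1) := by omega
      rw [this, Nat.mul_add_div hn, Nat.div_eq_of_lt (by omega)]
    rw [fdmh, h1]
    omega
  · obtain ⟨d, t, hd0, hdn, hdt, h1, h2, h3⟩ := uFun_two_spec n n hn hn le_rfl
    omega

lemma two_mul_prod_le {ι : Type*} (s : Finset ι) (dd tt : ι → ℕ) :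
    2 * ∏ i ∈ s, (dd i + tt i) ≤ (∏ i ∈ s, (dd i + 2 * tt i)) + ∏ i ∈ s, dd i := by
  induction s using Finset.cons_induction with
  | empty => simp
  | cons a s ha ih =>
    rw [Finset.prod_cons, Finset.prod_cons, Finset.prod_cons]
    have hP : ∏ i ∈ s, (dd i + tt i) ≤ ∏ i ∈ s, (dd i + 2 * tt i) :=
      Finset.prod_le_prod' fun i _ => by omega
    set A := ∏ i ∈ s, (dd i + tt i)
    set P := ∏ i ∈ s, (dd i + 2 * tt i)
    set X := ∏ i ∈ s, dd i
    calc 2 * ((dd a + tt a) * A) = dd a * (2 * A) + tt a * (2 * A) := by ring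
      _ ≤ dd a * (P + X) + tt a * (2 * P) := by
          exact Nat.add_le_add (Nat.mul_le_mul_left _ ih)
            (Nat.mul_le_mul_left _ (by omega))
      _ = (dd a + 2 * tt a) * P + dd a * X := by ring

/-- for a noncyclic abelian group of odd order `n` and type
`(n_1, …, n_r)`, `u±(G, (n-1)/2, 2) = n`. -/
theorem uPM_eq_card_of_noncyclic_odd (r : ℕ) (hr : 0 < r) (n : Fin r → ℕ)
    (hn1 : 2 ≤ n ⟨0, hr⟩)
    (hchain : ∀ i : Fin r, ∀ hi : i.val + 1 < r, n i ∣ n ⟨i.val + 1, hi⟩)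
    (G : Type*) [AddCommGroup G] [Fintype G]
    (e : G ≃+ ((i : Fin r) → ZMod (n i)))
    (hnc : ¬ IsAddCyclic G) (hodd : Odd (Fintype.card G))
    (hcard : Fintype.card G = ∏ i, n i) :
    sInf {k | ∃ ms : Fin r → ℕ, (∀ i, 1 ≤ ms i ∧ ms i ≤ n i) ∧
        ((∏ i, n i) - 1) / 2 ≤ ∏ i, ms i ∧ k = ∏ i, uFun (n i) (ms i) 2} =
      ∏ i, n i := by
  classical
  set N := ∏ i, n i with hN
  clear_value N
  have hNpos : 0 < N := hcard ▸ Fintype.card_pos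
  have hNodd : Odd N := hcard ▸ hodd
  have hpos : ∀ i, 0 < n i := by
    intro i
    rcases Nat.eq_zero_or_pos (n i) with h | h
    · exfalso
      have : N = 0 := by rw [hN]; exact Finset.prod_eq_zero (Finset.mem_univ i) h
      omega
    · exact h
  have hodd_i : ∀ i, Odd (n i) := by
    intro i
    have hdvd : n i ∣ N := by rw [hN]; exact Finset.dvd_prod_of_mem n (Finset.mem_univ i)
    rcases Nat.even_or_odd (n i) with h | h
    · exfalso
      obtain ⟨a, ha⟩ := h
      have h2d : (2 : ℕ) ∣ N := dvd_trans ⟨a, by omega⟩ hdvd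
      obtain ⟨b, hb⟩ := h2d
      obtain ⟨c, hc⟩ := hNodd
      omega
    · exact h
  have h2n : ∀ i, 2 ≤ n i := by
    have key : ∀ v, ∀ hv : v < r, 2 ≤ n ⟨v, hv⟩ := by
      intro v
      induction v with
      | zero => intro hv; exact hn1
      | succ w ih =>
        intro hv
        have hw : w < r := by omega
        have hd := hchain ⟨w, hw⟩ hv
        exact le_trans (ih hw) (Nat.le_of_dvd (hpos _) hd)
    intro i
    have := key i.val i.isLt
    simpa using this
  have h3n : ∀ i, 3 ≤ n i := by
    intro i
    have := h2n i
    obtain ⟨c, hc⟩ := hodd_i i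
    omega
  have hr2 : 2 ≤ r := by
    by_contra hcon
    have hr1 : r = 1 := by omega
    subst hr1
    apply hnc
    have hs : Function.Surjective
        (e.symm.toAddMonoidHom.comp (AddMonoidHom.single (fun i : Fin 1 => ZMod (n i)) 0)) := by
      intro g
      refine ⟨e g 0, ?_⟩
      have hv : Pi.single (M := fun i : Fin 1 => ZMod (n i)) 0 (e g 0) = e g := by
        funext i
        have : i = 0 := Subsingleton.elim i 0
        subst this
        exact Pi.single_eq_same _ _
      simp only [AddMonoidHom.coe_comp, Function.comp_apply, AddMonoidHom.single_apply]
      rw [hv]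
      exact e.symm_apply_apply g
    exact isAddCyclic_of_surjective _ hs
  -- the witness `ms = n`
  have hwit : N ∈ {k | ∃ ms : Fin r → ℕ, (∀ i, 1 ≤ ms i ∧ ms i ≤ n i) ∧
      (N - 1) / 2 ≤ ∏ i, ms i ∧ k = ∏ i, uFun (n i) (ms i) 2} := by
    refine ⟨n, fun i => ⟨hpos i, le_refl _⟩, ?_, ?_⟩
    · rw [← hN]
      have := Nat.div_le_self (N - 1) 2
      omega
    · rw [hN]
      exact Finset.prod_congr rfl fun i _ => (uFun_self (n i) (hpos i)).symm
  apply le_antisymm (Nat.sInf_le hwit)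
  apply le_csInf ⟨N, hwit⟩
  rintro k ⟨ms, hms, hsum, rfl⟩
  -- lower bound
  choose dd tt hd0 hdn hdt hmle hlen hue using fun i =>
    uFun_two_spec (n i) (ms i) (hpos i) ((hms i).1) ((hms i).2)
  have hKeq : ∏ i, uFun (n i) (ms i) 2 = ∏ i, (dd i + 2 * tt i) :=
    Finset.prod_congr rfl fun i _ => hue i
  rw [hKeq]
  set K := ∏ i, (dd i + 2 * tt i) with hK
  set A := ∏ i, (dd i + tt i) with hA
  set D := ∏ i, dd i with hD
  clear_value K A D
  have hdd_odd : ∀ i, Odd (dd i) := by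
    intro i
    rcases Nat.even_or_odd (dd i) with h | h
    · exfalso
      obtain ⟨a, ha⟩ := h
      have h2d : (2 : ℕ) ∣ n i := dvd_trans ⟨a, by omega⟩ (hdn i)
      obtain ⟨b, hb⟩ := h2d
      obtain ⟨c, hc⟩ := hodd_i i
      omega
    · exact h
  have hKodd : Odd K := by
    rw [hK]
    apply Finset.prod_induction _ Odd (fun a b => Odd.mul) odd_one
    intro i _
    obtain ⟨c, hc⟩ := hdd_odd i
    exact ⟨c + tt i, by omega⟩
  have hDodd : Odd D := by
    rw [hD]
    exact Finset.prod_induction _ Odd (fun a b => Odd.mul) odd_one fun i _ => hdd_odd i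
  have hDK : D ∣ K := by
    rw [hD, hK]
    refine Finset.prod_dvd_prod_of_dvd _ _ fun i _ => ?_
    exact Dvd.dvd.add dvd_rfl ((hdt i).mul_left 2)
  have hDN : D ∣ N := by
    rw [hD, hN]
    exact Finset.prod_dvd_prod_of_dvd _ _ fun i _ => hdn i
  have h2A : 2 * A ≤ K + D := by
    rw [hA, hK, hD]
    exact two_mul_prod_le _ _ _
  have hmA : ∏ i, ms i ≤ A := by
    rw [hA]
    exact Finset.prod_le_prod' fun i _ => hmle i
  have hN1 : N - 1 ≤ 2 * ∏ i, ms i := by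
    obtain ⟨c, hc⟩ := hNodd
    have h1 : (N - 1) / 2 = c := by omega
    rw [h1] at hsum
    omega
  have hApos : 1 ≤ A := by
    rw [hA]
    exact Finset.one_le_prod' fun i _ => by have := hd0 i; omega
  have hDpos : 1 ≤ D := by
    rw [hD]
    exact Finset.one_le_prod' fun i _ => hd0 i
  by_contra hlt
  push_neg at hlt
  -- K < N
  have hKD : K + D ≤ N := by
    have h1 : D ∣ N - K := Nat.dvd_sub hDN hDK
    have h2 : D ≤ N - K := Nat.le_of_dvd (by omega) h1
    omega
  have hKD2 : N - 1 ≤ K + D := by omega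
  rcases (by omega : K + D = N ∨ K + D = N - 1) with hcase | hcase
  · obtain ⟨a, ha⟩ := hKodd
    obtain ⟨b, hb⟩ := hDodd
    obtain ⟨c, hc⟩ := hNodd
    omega
  · -- D = 1 case
    have hD1 : D = 1 := by
      have h1 : D ∣ N - 1 := by
        have : D ∣ K + D := Dvd.dvd.add hDK dvd_rfl
        rwa [hcase] at this
      have h2 : D ∣ N - (N - 1) := Nat.dvd_sub hDN h1
      have h3 : N - (N - 1) = 1 := by omega
      rw [h3] at h2
      exact Nat.dvd_one.mp h2
    have hd1 : ∀ i, dd i = 1 := by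
      intro i
      have h1 : dd i ∣ D := hD ▸ Finset.dvd_prod_of_mem dd (Finset.mem_univ i)
      rw [hD1] at h1
      exact Nat.dvd_one.mp h1
    have hKval : K = N - 2 := by omega
    have h2Aeq : 2 * A = N - 1 := by omega
    by_cases hex : ∃ i j, i ≠ j ∧ 1 ≤ tt i ∧ 1 ≤ tt j
    · obtain ⟨i, j, hij, hti, htj⟩ := hex
      have hjmem : j ∈ Finset.univ.erase i := Finset.mem_erase.mpr ⟨hij.symm, Finset.mem_univ j⟩
      set s2 : Finset (Fin r) := (Finset.univ.erase i).erase j with hs2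
      have hKdec : K = (dd i + 2 * tt i) * ((dd j + 2 * tt j) * ∏ l ∈ s2, (dd l + 2 * tt l)) := by
        rw [hK, ← Finset.mul_prod_erase _ _ (Finset.mem_univ i),
          ← Finset.mul_prod_erase _ _ hjmem]
      have hAdec : A = (dd i + tt i) * ((dd j + tt j) * ∏ l ∈ s2, (dd l + tt l)) := by
        rw [hA, ← Finset.mul_prod_erase _ _ (Finset.mem_univ i),
          ← Finset.mul_prod_erase _ _ hjmem]
      set R := ∏ l ∈ s2, (dd l + 2 * tt l) with hR
      set R' := ∏ l ∈ s2, (dd l + tt l) with hR'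
      have hRR : R' ≤ R := Finset.prod_le_prod' fun l _ => by omega
      have hR'pos : 1 ≤ R' := Finset.one_le_prod' fun l _ => by have := hd0 l; omega
      have hfac : (dd i + 2 * tt i) * (dd j + 2 * tt j) ≥
          2 * ((dd i + tt i) * (dd j + tt j)) + 1 := by
        rw [hd1 i, hd1 j]
        nlinarith
      have hKge : K ≥ 2 * A + 1 := by
        calc K = (dd i + 2 * tt i) * (dd j + 2 * tt j) * R := by rw [hKdec]; ring
          _ ≥ (dd i + 2 * tt i) * (dd j + 2 * tt j) * R' := by
              exact Nat.mul_le_mul_left _ hRR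
          _ ≥ (2 * ((dd i + tt i) * (dd j + tt j)) + 1) * R' := Nat.mul_le_mul_right _ hfac
          _ = 2 * ((dd i + tt i) * ((dd j + tt j) * R')) + R' := by ring
          _ ≥ 2 * A + 1 := by rw [hAdec]; omega
      omega
    · push_neg at hex
      obtain ⟨i0, hall⟩ : ∃ i0, ∀ j, j ≠ i0 → tt j = 0 := by
        by_cases hex2 : ∃ i, 1 ≤ tt i
        · obtain ⟨i1, h0⟩ := hex2
          refine ⟨i1, fun j hj => ?_⟩
          have := hex i1 j (Ne.symm hj) h0
          omega
        · push_neg at hex2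
          exact ⟨⟨0, hr⟩, fun j _ => by have := hex2 j; omega⟩
      have hAval : A = dd i0 + tt i0 := by
        rw [hA, ← Finset.mul_prod_erase _ _ (Finset.mem_univ i0)]
        have h1 : ∏ l ∈ Finset.univ.erase i0, (dd l + tt l) = 1 := by
          apply Finset.prod_eq_one
          intro l hl
          rw [hd1 l, hall l (Finset.mem_erase.mp hl).1]
          rfl
        rw [h1, mul_one]
      have hAn : A ≤ n i0 := hAval ▸ hlen i0
      obtain ⟨j0, hj0⟩ : ∃ j0 : Fin r, j0 ≠ i0 := by
        rcases Decidable.eq_or_ne (⟨0, by omega⟩ : Fin r) i0 with h | h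
        · refine ⟨⟨1, by omega⟩, ?_⟩
          rw [← h]
          intro hc
          have h2 := congrArg Fin.val hc
          simp at h2
        · exact ⟨_, h⟩
      have hNge : n i0 * n j0 ≤ N := by
        rw [hN, ← Finset.mul_prod_erase _ _ (Finset.mem_univ i0)]
        apply Nat.mul_le_mul_left
        exact Finset.single_le_prod' (fun l _ => hpos l)
          (Finset.mem_erase.mpr ⟨hj0, Finset.mem_univ j0⟩)
      have h3j : 3 ≤ n j0 := h3n j0
      have : n i0 * 3 ≤ n i0 * n j0 := Nat.mul_le_mul_left _ h3j
      have h3i : 3 ≤ n i0 := h3n i0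
      omega
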